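/- arXiv:0806.2421 — 4 statements merged into one kernel-verified Lean document; each statement's English description precedes it below -/
import Mathlib

section
/- For every positive integer k, setting n = 6k, the graph G(n) has no dominating set of cardinality at most k; equivalently, every dominating set of G(n) has more than n/6 vertices. -/
/-- The relation generating the edges of the graph `G(n)` from the paper
(vertices are 0-indexed: `a : Fin n` corresponds to `v_{a+1}`).
The clauses correspond to: the triangles `S_i`, the edges `v_j v_{j+3}`,
and the edges `v_{3i-2} v_{3i+2}`, `v_{3i-1} v_{3i+3}`, `v_{3i} v_{3i+1}`. -/
def GnRel (n : ℕ) (a b : Fin n) : Prop :=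
  ((a : ℕ) / 3 = (b : ℕ) / 3) ∨
  ((b : ℕ) = (a : ℕ) + 3) ∨
  ((b : ℕ) = (a : ℕ) + 4 ∧ (a : ℕ) % 3 = 0) ∨
  ((b : ℕ) = (a : ℕ) + 4 ∧ (a : ℕ) % 3 = 1) ∨
  ((b : ℕ) = (a : ℕ) + 1 ∧ (a : ℕ) % 3 = 2)

/-- The graph `G(n)` from the paper. -/
def Gn (n : ℕ) : SimpleGraph (Fin n) := SimpleGraph.fromRel (GnRel n)

/-- Potential function for the counting argument: for each triangle index `t`
let `d t` be the number of vertices of the dominating set inside triangle `t`;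
the potential of the prefix state `(d (2j), d (2j+1))` measures how much the
doubled prefix sum exceeds the index. -/
def Vfn (a b : ℕ) : ℕ :=
  if a = 0 then (if b = 0 then 0 else 2)
  else if a = 1 then (if b = 0 then 0 else if b = 1 then 2 else 4)
  else (if b = 0 then 2 else if b = 1 then 4 else 6)

lemma V_base (a b : ℕ) (h : a = 0 → 2 ≤ b) : 2 + Vfn a b ≤ 2 * (a + b) := by
  unfold Vfn; split_ifs <;> omega

lemma V_step (a b c e : ℕ) (h1 : b = 0 → 2 ≤ a + c) (h2 : c = 0 → 2 ≤ b + e) :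
    Vfn c e + 2 ≤ Vfn a b + 2 * c + 2 * e := by
  unfold Vfn; split_ifs <;> omega

lemma V_final (a b : ℕ) (h : b = 0 → 2 ≤ a) : 2 ≤ Vfn a b := by
  unfold Vfn; split_ifs <;> omega

lemma sum_two (f : ℕ → ℕ) (n : ℕ) :
    ∑ t ∈ Finset.range (n + 2), f t = (∑ t ∈ Finset.range n, f t) + f n + f (n + 1) := by
  rw [Finset.sum_range_succ, Finset.sum_range_succ]

/-- The purely numerical part of the argument: if `d : ℕ → ℕ` is a sequence
(of length `2k`, i.e. vanishing at index `2k`) such that every zero entry has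
neighbouring entries summing to at least `2` (with out-of-range entries being
zero), then the total sum is at least `k + 1`. -/
lemma sum_lower (k : ℕ) (hk : 0 < k) (d : ℕ → ℕ)
    (hL : d (2 * k) = 0)
    (hc : ∀ t, t < 2 * k → d t = 0 → 2 ≤ d (t - 1) + d (t + 1)) :
    k + 1 ≤ ∑ t ∈ Finset.range (2 * k), d t := by
  obtain ⟨m, rfl⟩ : ∃ m, k = m + 1 := ⟨k - 1, by omega⟩
  have key : ∀ j, j < m + 1 →
      2 * (j + 1) + Vfn (d (2 * j)) (d (2 * j + 1)) ≤
        2 * ∑ t ∈ Finset.range (2 * j + 2), d t := by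
    intro j
    induction j with
    | zero =>
      intro _
      have h0 := hc 0 (by omega)
      simp only [Nat.zero_sub, Nat.zero_add] at h0
      have hb : d 0 = 0 → 2 ≤ d 1 := by intro h; have := h0 h; omega
      have hVb := V_base (d 0) (d 1) hb
      simp only [Nat.mul_zero, Nat.zero_add]
      rw [Finset.sum_range_succ, Finset.sum_range_succ, Finset.sum_range_zero]
      omega
    | succ j ih =>
      intro hj
      have ih' := ih (by omega)
      have h1 := hc (2 * j + 1) (by omega)
      have h2 := hc (2 * j + 2) (by omega)
      have e1 : 2 * j + 1 - 1 = 2 * j := by omega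
      have e2 : 2 * j + 2 - 1 = 2 * j + 1 := by omega
      have e5 : 2 * j + 1 + 1 = 2 * j + 2 := by omega
      have e6 : 2 * j + 2 + 1 = 2 * j + 3 := by omega
      rw [e1, e5] at h1
      rw [e2, e6] at h2
      have hs := V_step (d (2 * j)) (d (2 * j + 1)) (d (2 * j + 2)) (d (2 * j + 3)) h1 h2
      have e3 : 2 * (j + 1) = 2 * j + 2 := by ring
      have e4 : 2 * (j + 1) + 1 = 2 * j + 3 := by ring
      have e7 : 2 * (j + 1 + 1) = 2 * j + 4 := by ring
      rw [e7, e4, e3, sum_two, e6]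
      omega
  have hkey := key m (by omega)
  have hfin := hc (2 * m + 1) (by omega)
  have e1 : 2 * m + 1 - 1 = 2 * m := by omega
  have e2 : 2 * m + 1 + 1 = 2 * (m + 1) := by ring
  rw [e1, e2, hL] at hfin
  have hV := V_final (d (2 * m)) (d (2 * m + 1)) (by intro h; have := hfin h; omega)
  have e3 : 2 * (m + 1) = 2 * m + 2 := by ring
  rw [e3]
  omega

/-- The graph-theoretic part of the argument: if triangle `t` contains no vertex
of the dominating set, then the two neighbouring triangles together contain at
least two vertices of the dominating set (a single vertex of a neighbouring
triangle dominates only two of the three vertices of triangle `t`). -/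
lemma local_bound (k : ℕ) (hk : 0 < k) (D : Finset (Fin (6 * k)))
    (hdom : ∀ v : Fin (6 * k), v ∈ D ∨ ∃ u ∈ D, (Gn (6 * k)).Adj u v)
    (t : ℕ) (ht : t < 2 * k)
    (h0 : (D.filter (fun v : Fin (6 * k) => (v : ℕ) / 3 = t)).card = 0) :
    2 ≤ (D.filter (fun v : Fin (6 * k) => (v : ℕ) / 3 = t - 1)).card +
        (D.filter (fun v : Fin (6 * k) => (v : ℕ) / 3 = t + 1)).card := by
  by_contra hlt
  push_neg at hlt
  have hnot : ∀ v ∈ D, (v : ℕ) / 3 ≠ t := by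
    intro v hv hvt
    have hmem : v ∈ D.filter (fun v : Fin (6 * k) => (v : ℕ) / 3 = t) :=
      Finset.mem_filter.mpr ⟨hv, hvt⟩
    have hemp : D.filter (fun v : Fin (6 * k) => (v : ℕ) / 3 = t) = ∅ :=
      Finset.card_eq_zero.mp h0
    rw [hemp] at hmem
    exact absurd hmem (Finset.notMem_empty v)
  have hget : ∀ p : ℕ, ∀ _hp : p < 3, ∃ u ∈ D, (Gn (6 * k)).Adj u ⟨3 * t + p, by omega⟩ := by
    intro p hp
    rcases hdom ⟨3 * t + p, by omega⟩ with hin | hex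
    · exfalso
      have hne := hnot _ hin
      simp only [Fin.val_mk] at hne
      omega
    · exact hex
  obtain ⟨u0, hu0D, hu0⟩ := hget 0 (by omega)
  obtain ⟨u1, hu1D, hu1⟩ := hget 1 (by omega)
  obtain ⟨u2, hu2D, hu2⟩ := hget 2 (by omega)
  set A := D.filter (fun v : Fin (6 * k) => (v : ℕ) / 3 = t - 1) with hA
  set B := D.filter (fun v : Fin (6 * k) => (v : ℕ) / 3 = t + 1) with hB
  have hmemAB : ∀ u, u ∈ D → ∀ p : ℕ, ∀ _hp : p < 3,
      (Gn (6 * k)).Adj u ⟨3 * t + p, by omega⟩ → u ∈ A ∪ B := by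
    intro u huD p hp hadj
    have hne := hnot u huD
    rw [Gn, SimpleGraph.fromRel_adj] at hadj
    obtain ⟨-, hrel⟩ := hadj
    simp only [GnRel, Fin.val_mk] at hrel
    have hcase : (u : ℕ) / 3 = t - 1 ∨ (u : ℕ) / 3 = t + 1 := by omega
    rcases hcase with h | h
    · exact Finset.mem_union_left _ (Finset.mem_filter.mpr ⟨huD, h⟩)
    · exact Finset.mem_union_right _ (Finset.mem_filter.mpr ⟨huD, h⟩)
  have hABcard : (A ∪ B).card ≤ 1 := le_trans (Finset.card_union_le A B) (by omega)
  have h01 : u0 = u1 := Finset.card_le_one.mp hABcard _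
    (hmemAB u0 hu0D 0 (by omega) hu0) _ (hmemAB u1 hu1D 1 (by omega) hu1)
  have h02 : u0 = u2 := Finset.card_le_one.mp hABcard _
    (hmemAB u0 hu0D 0 (by omega) hu0) _ (hmemAB u2 hu2D 2 (by omega) hu2)
  subst h01
  subst h02
  rw [Gn, SimpleGraph.fromRel_adj] at hu0 hu1 hu2
  have hr0 := hu0.2
  have hr1 := hu1.2
  have hr2 := hu2.2
  simp only [GnRel, Fin.val_mk] at hr0 hr1 hr2
  have hne := hnot u0 hu0D
  omega

/-- For every positive integer `k`, with `n = 6k`, the graph `G(n)` has no dominating set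
of cardinality at most `k`; equivalently, every dominating set of `G(n)` has more than
`n/6` vertices. -/
theorem Gn_no_small_dominating_set (k : ℕ) (hk : 0 < k)
    (D : Finset (Fin (6 * k)))
    (hdom : ∀ v : Fin (6 * k), v ∈ D ∨ ∃ u ∈ D, (Gn (6 * k)).Adj u v) :
    k < D.card := by
  have hcard : D.card = ∑ t ∈ Finset.range (2 * k),
      (D.filter (fun v : Fin (6 * k) => (v : ℕ) / 3 = t)).card := by
    apply Finset.card_eq_sum_card_fiberwise
    intro v _
    simp only [Finset.mem_coe, Finset.mem_range]
    have := v.isLt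
    omega
  have hL : (D.filter (fun v : Fin (6 * k) => (v : ℕ) / 3 = 2 * k)).card = 0 := by
    simp only [Finset.card_eq_zero]
    rw [Finset.eq_empty_iff_forall_notMem]
    intro v hv
    rw [Finset.mem_filter] at hv
    have := v.isLt
    omega
  have hmain := sum_lower k hk
    (fun t => (D.filter (fun v : Fin (6 * k) => (v : ℕ) / 3 = t)).card)
    hL (fun t ht h0 => local_bound k hk D hdom t ht h0)
  omega
end

section
/- Let S = {(x,y) ∈ ℤ × ℤ : x + 2y ≡ 0 (mod 7)}. Then every vertex of G_∞ lies in the closed neighborhood of exactly one element of S. In particular, S is a dominating set of G_∞ in which the closed neighborhoods of distinct elements are pairwise disjoint (S uses 'every seventh vertex' of G_∞). -/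
/-- The 6-regular triangular lattice `G∞`: vertices are `ℤ × ℤ`, with distinct
vertices `(a,b)` and `(c,d)` adjacent iff
`(c-a, d-b) ∈ {(1,0), (-1,0), (0,1), (0,-1), (1,1), (-1,-1)}`. -/
def Ginf : SimpleGraph (ℤ × ℤ) :=
  SimpleGraph.fromRel fun p q =>
    (q.1 - p.1, q.2 - p.2) ∈
      ({(1, 0), (-1, 0), (0, 1), (0, -1), (1, 1), (-1, -1)} : Set (ℤ × ℤ))

lemma Ginf_closed_iff (u v : ℤ × ℤ) :
    (u = v ∨ Ginf.Adj u v) ↔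
      ((v.1 - u.1 = 0 ∧ v.2 - u.2 = 0) ∨ (v.1 - u.1 = 1 ∧ v.2 - u.2 = 0) ∨
        (v.1 - u.1 = -1 ∧ v.2 - u.2 = 0) ∨ (v.1 - u.1 = 0 ∧ v.2 - u.2 = 1) ∨
        (v.1 - u.1 = 0 ∧ v.2 - u.2 = -1) ∨ (v.1 - u.1 = 1 ∧ v.2 - u.2 = 1) ∨
        (v.1 - u.1 = -1 ∧ v.2 - u.2 = -1)) := by
  simp only [Ginf, SimpleGraph.fromRel_adj, Set.mem_insert_iff, Set.mem_singleton_iff,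
    Prod.mk.injEq, Prod.ext_iff, ne_eq]
  omega

lemma Ginf_key (a b d1 d2 : ℤ)
    (hd : (d1 = 0 ∧ d2 = 0) ∨ (d1 = 1 ∧ d2 = 0) ∨ (d1 = -1 ∧ d2 = 0) ∨
      (d1 = 0 ∧ d2 = 1) ∨ (d1 = 0 ∧ d2 = -1) ∨ (d1 = 1 ∧ d2 = 1) ∨ (d1 = -1 ∧ d2 = -1))
    (hdiv : (7 : ℤ) ∣ (a - d1) + 2 * (b - d2)) :
    ∃! u : ℤ × ℤ, (7 : ℤ) ∣ (u.1 + 2 * u.2) ∧ (u = (a, b) ∨ Ginf.Adj u (a, b)) := by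
  refine ⟨(a - d1, b - d2), ⟨hdiv, (Ginf_closed_iff _ _).2 (by dsimp only; omega)⟩, ?_⟩
  rintro ⟨x, y⟩ ⟨hx, hmem⟩
  rw [Ginf_closed_iff] at hmem
  dsimp only at hx hmem
  simp only [Prod.mk.injEq]
  omega

/-- Let `S = {(x,y) : x + 2y ≡ 0 (mod 7)}`. Every vertex of `G∞` lies in the closed
neighborhood of exactly one element of `S`; in particular `S` is a dominating set of
`G∞` whose elements have pairwise disjoint closed neighborhoods. -/
theorem Ginf_perfect_dominating_set :
    ∀ v : ℤ × ℤ, ∃! u : ℤ × ℤ,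
      (7 : ℤ) ∣ (u.1 + 2 * u.2) ∧ (u = v ∨ Ginf.Adj u v) := by
  rintro ⟨a, b⟩
  have h7 : (a + 2 * b) % 7 = 0 ∨ (a + 2 * b) % 7 = 1 ∨ (a + 2 * b) % 7 = 2 ∨
      (a + 2 * b) % 7 = 3 ∨ (a + 2 * b) % 7 = 4 ∨ (a + 2 * b) % 7 = 5 ∨
      (a + 2 * b) % 7 = 6 := by omega
  rcases h7 with h | h | h | h | h | h | h
  · exact Ginf_key a b 0 0 (by tauto) (by omega)
  · exact Ginf_key a b 1 0 (by tauto) (by omega)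
  · exact Ginf_key a b 0 1 (by tauto) (by omega)
  · exact Ginf_key a b 1 1 (by tauto) (by omega)
  · exact Ginf_key a b (-1) (-1) (by tauto) (by omega)
  · exact Ginf_key a b 0 (-1) (by tauto) (by omega)
  · exact Ginf_key a b (-1) 0 (by tauto) (by omega)
end

section
/- Let T be a finite tree with at least two vertices and let W ⊆ V(T) be a set of m vertices that contains every vertex of T whose degree is not equal to 2. Suppose that every path in T whose two endpoints lie in W and none of whose internal vertices lies in W has length at most p. Then T has at most (m−1)·p edges. -/
open SimpleGraph

section Aux

variable {V : Type*} [DecidableEq V] {G : SimpleGraph V}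

lemma tree_aux_exists_last_edge {u v : V} (p : G.Walk u v) (h : p.length ≠ 0) :
    ∃ a, s(a, v) ∈ p.edges := by
  induction p with
  | nil => simp at h
  | @cons x y z hadj q ih =>
    by_cases hq : q.length = 0
    · obtain rfl : y = z := SimpleGraph.Walk.eq_of_length_eq_zero hq
      exact ⟨x, by simp⟩
    · obtain ⟨a, ha⟩ := ih hq
      exact ⟨a, by simp [ha]⟩

lemma tree_aux_unique_last_edge {u v : V} (p : G.Walk u v) :
    p.IsPath → ∀ {a b : V}, s(a, v) ∈ p.edges → s(b, v) ∈ p.edges → a = b := by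
  induction p with
  | nil => intro _ a b ha _; simp at ha
  | @cons x y z hadj q ih =>
    intro hp a b ha hb
    rw [SimpleGraph.Walk.cons_isPath_iff] at hp
    have hxz : x ≠ z := fun h => hp.2 (h ▸ q.end_mem_support)
    rw [SimpleGraph.Walk.edges_cons, List.mem_cons] at ha hb
    have hcase : ∀ c : V, s(c, z) = s(x, y) → c = x ∧ z = y := by
      intro c hc
      rw [Sym2.eq_iff] at hc
      rcases hc with h | h
      · exact h
      · exact absurd h.2.symm hxz
    rcases ha with ha | ha <;> rcases hb with hb | hb
    · exact (hcase a ha).1.trans (hcase b hb).1.symm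
    · obtain ⟨-, rfl⟩ := hcase a ha
      rw [SimpleGraph.Walk.isPath_iff_eq_nil.mp hp.1] at hb
      simp at hb
    · obtain ⟨-, rfl⟩ := hcase b hb
      rw [SimpleGraph.Walk.isPath_iff_eq_nil.mp hp.1] at ha
      simp at ha
    · exact ih hp.1 ha hb

lemma tree_aux_key (hA : G.IsAcyclic) {r x y : V} (p : G.Walk r x) (hp : p.IsPath)
    (hxy : G.Adj x y) (hy : y ∈ p.support) : s(y, x) ∈ p.edges := by
  by_contra h
  refine hA (SimpleGraph.Walk.cons hxy.symm (p.dropUntil y hy).reverse) ?_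
  rw [SimpleGraph.Walk.cons_isCycle_iff]
  refine ⟨(hp.dropUntil hy).reverse, ?_⟩
  rw [SimpleGraph.Walk.edges_reverse, List.mem_reverse]
  exact fun hmem => h (SimpleGraph.Walk.edges_dropUntil_subset p hy hmem)

lemma tree_aux_concat_isPath {u v w : V} {p : G.Walk u v} (hp : p.IsPath) (h : G.Adj v w)
    (hw : w ∉ p.support) : (p.concat h).IsPath := by
  rw [← SimpleGraph.Walk.isPath_reverse_iff, SimpleGraph.Walk.reverse_concat]
  exact hp.reverse.cons (by simpa [SimpleGraph.Walk.support_reverse] using hw)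

end Aux

/-- Let `T` be a finite tree with at least two vertices and let `W ⊆ V(T)` be a set of
`m` vertices that contains every vertex of `T` whose degree is not `2`. Suppose every
path in `T` whose two endpoints lie in `W` and none of whose internal vertices lies in
`W` has length at most `p`. Then `T` has at most `(m-1)·p` edges. -/
theorem tree_edge_bound {V : Type*} [Fintype V] [DecidableEq V]
    (G : SimpleGraph V) [DecidableRel G.Adj] (hT : G.IsTree)
    (h2 : 2 ≤ Fintype.card V)
    (W : Finset V) (m p : ℕ) (hm : W.card = m)
    (hdeg : ∀ v : V, G.degree v ≠ 2 → v ∈ W)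
    (hpath : ∀ (u v : V) (q : G.Walk u v), q.IsPath → u ∈ W → v ∈ W →
      (∀ x ∈ q.support, x ≠ u → x ≠ v → x ∉ W) → q.length ≤ p) :
    G.edgeFinset.card ≤ (m - 1) * p := by
  classical
  -- `W` is nonempty: otherwise every vertex has degree 2 and the degree sum is wrong.
  have hWne : ∃ r, r ∈ W := by
    by_contra hc
    push_neg at hc
    have hall : ∀ v : V, G.degree v = 2 := by
      intro v
      by_contra hv
      exact hc v (hdeg v hv)
    have h1 := G.sum_degrees_eq_twice_card_edges
    have h3 := hT.card_edgeFinset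
    rw [Finset.sum_congr rfl fun v _ => hall v, Finset.sum_const, Finset.card_univ, smul_eq_mul] at h1
    omega
  obtain ⟨r, hr⟩ := hWne
  -- the unique path from `r` to each vertex
  have hch : ∀ v : V, ∃ q : G.Walk r v, q.IsPath ∧ ∀ q' : G.Walk r v, q'.IsPath → q' = q :=
    fun v => hT.existsUnique_path r v
  choose P hP hPu using hch
  have hPr : P r = SimpleGraph.Walk.nil :=
    (hPu r SimpleGraph.Walk.nil SimpleGraph.Walk.IsPath.nil).symm
  have hpre : ∀ (v u : V) (hu : u ∈ (P v).support), P u = (P v).takeUntil u hu :=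
    fun v u hu => (hPu u _ ((hP v).takeUntil hu)).symm
  have hstrict : ∀ (v u : V) (hu : u ∈ (P v).support), u ≠ v →
      (P u).length < (P v).length := by
    intro v u hu hne
    have h1 := congrArg SimpleGraph.Walk.length (SimpleGraph.Walk.take_spec (P v) hu)
    rw [SimpleGraph.Walk.length_append] at h1
    have h3 : ((P v).dropUntil u hu).length ≠ 0 := fun h0 =>
      hne (SimpleGraph.Walk.eq_of_length_eq_zero h0)
    rw [hpre v u hu]
    omega
  -- every edge lies on some `P v`
  have hSex : ∀ e ∈ G.edgeFinset, ∃ v, e ∈ (P v).edges := by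
    intro e he
    rw [SimpleGraph.mem_edgeFinset] at he
    induction e with
    | _ x y =>
      rw [SimpleGraph.mem_edgeSet] at he
      by_cases hy : y ∈ (P x).support
      · exact ⟨x, by rw [Sym2.eq_swap]; exact tree_aux_key hT.IsAcyclic (P x) (hP x) he hy⟩
      · refine ⟨y, ?_⟩
        rw [← hPu y _ (tree_aux_concat_isPath (hP x) he hy)]
        simp [SimpleGraph.Walk.edges_concat]
  -- every edge lies on `P w` for some `w ∈ W` (take a deepest such vertex)
  have hWmax : ∀ e ∈ G.edgeFinset, ∃ w ∈ W, e ∈ (P w).edges := by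
    intro e he
    obtain ⟨v0, hv0⟩ := hSex e he
    obtain ⟨x, hxS, hxmax⟩ := Finset.exists_max_image
      (Finset.univ.filter fun v => e ∈ (P v).edges) (fun v => (P v).length)
      ⟨v0, by simp [hv0]⟩
    rw [Finset.mem_filter] at hxS
    have hxe := hxS.2
    refine ⟨x, ?_, hxe⟩
    by_contra hxW
    have hdx : G.degree x = 2 := by
      by_contra h
      exact hxW (hdeg x h)
    have hxr : x ≠ r := by
      rintro rfl
      rw [hPr] at hxe
      simp at hxe
    have hlen : (P x).length ≠ 0 := by
      intro h0
      have h1 : (P x).edges.length = 0 := by rw [SimpleGraph.Walk.length_edges, h0]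
      rw [List.length_eq_zero_iff] at h1
      rw [h1] at hxe
      simp at hxe
    obtain ⟨a, ha⟩ := tree_aux_exists_last_edge (P x) hlen
    have hcard : 1 < (G.neighborFinset x).card := by
      rw [SimpleGraph.card_neighborFinset_eq_degree, hdx]; omega
    obtain ⟨b, hbmem, hba⟩ := Finset.exists_mem_ne hcard a
    rw [SimpleGraph.mem_neighborFinset] at hbmem
    have hbsup : b ∉ (P x).support := by
      intro hb
      exact hba (tree_aux_unique_last_edge (P x) (hP x)
        (tree_aux_key hT.IsAcyclic (P x) (hP x) hbmem hb) ha)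
    have hPb : P b = (P x).concat hbmem :=
      (hPu b _ (tree_aux_concat_isPath (hP x) hbmem hbsup)).symm
    have hbe : e ∈ (P b).edges := by
      rw [hPb]
      simp [SimpleGraph.Walk.edges_concat, hxe]
    have hblen : (P b).length = (P x).length + 1 := by
      rw [hPb, SimpleGraph.Walk.length_concat]
    have := hxmax b (by simp [hbe])
    omega
  -- for each edge pick the shallowest `w ∈ W` with `e ∈ (P w).edges`
  have Hf : ∀ e : Sym2 V, ∃ w : V, e ∈ G.edgeFinset →
      w ∈ W ∧ e ∈ (P w).edges ∧
        ∀ u ∈ W, e ∈ (P u).edges → (P w).length ≤ (P u).length := by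
    intro e
    by_cases he : e ∈ G.edgeFinset
    · obtain ⟨w0, hw0W, hw0e⟩ := hWmax e he
      obtain ⟨w, hwmem, hwmin⟩ := Finset.exists_min_image
        (W.filter fun u => e ∈ (P u).edges) (fun u => (P u).length)
        ⟨w0, by simp [hw0W, hw0e]⟩
      rw [Finset.mem_filter] at hwmem
      exact ⟨w, fun _ => ⟨hwmem.1, hwmem.2, fun u huW hue => hwmin u (by simp [huW, hue])⟩⟩
    · exact ⟨r, fun h => absurd h he⟩
  choose f hf using Hf
  -- the image of `f` avoids `r`
  have hfW : ∀ e ∈ G.edgeFinset, f e ∈ W.erase r := by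
    intro e he
    obtain ⟨h1, hl2, -⟩ := hf e he
    rw [Finset.mem_erase]
    refine ⟨?_, h1⟩
    rintro rfl
    rw [hPr] at hl2
    simp at hl2
  -- fibers of `f` have size at most `p`
  have hfiber : ∀ w ∈ G.edgeFinset.image f,
      (G.edgeFinset.filter fun e => f e = w).card ≤ p := by
    intro w hw
    obtain ⟨e0, he0, rfl⟩ := Finset.mem_image.mp hw
    obtain ⟨hwW, hwe, -⟩ := hf e0 he0
    set w := f e0 with hwdef
    have hwr : w ≠ r := by
      rintro h
      rw [h, hPr] at hwe
      simp at hwe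
    have hrsup : r ∈ (P w).support := SimpleGraph.Walk.start_mem_support _
    obtain ⟨u₀, hu₀mem, hu₀max⟩ := Finset.exists_max_image
      ((P w).support.toFinset.filter fun u => u ∈ W ∧ u ≠ w) (fun u => (P u).length)
      ⟨r, by simp [hrsup, hr, Ne.symm hwr]⟩
    simp only [Finset.mem_filter, List.mem_toFinset] at hu₀mem
    obtain ⟨hu₀sup, hu₀W, hu₀w⟩ := hu₀mem
    -- the final segment of `P w`, from `u₀` to `w`
    have hDpath : ((P w).dropUntil u₀ hu₀sup).IsPath := (hP w).dropUntil hu₀sup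
    have hDlen : ((P w).dropUntil u₀ hu₀sup).length ≤ p := by
      refine hpath u₀ w _ hDpath hu₀W hwW ?_
      intro x hx hxu hxw hxW
      have hxsup : x ∈ (P w).support :=
        SimpleGraph.Walk.support_dropUntil_subset (P w) hu₀sup hx
      have hle := hu₀max x (by simp [hxsup, hxW, hxw])
      have hQpath : (((P w).takeUntil u₀ hu₀sup).append
          (((P w).dropUntil u₀ hu₀sup).takeUntil x hx)).IsPath := by
        refine SimpleGraph.Walk.IsPath.of_append_left
          (q := ((P w).dropUntil u₀ hu₀sup).dropUntil x hx) ?_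
        rw [← SimpleGraph.Walk.append_assoc,
          SimpleGraph.Walk.take_spec ((P w).dropUntil u₀ hu₀sup) hx,
          SimpleGraph.Walk.take_spec (P w) hu₀sup]
        exact hP w
      have hPx : P x = ((P w).takeUntil u₀ hu₀sup).append
          (((P w).dropUntil u₀ hu₀sup).takeUntil x hx) := (hPu x _ hQpath).symm
      have hu₀x : u₀ ∈ (P x).support := by
        rw [hPx, SimpleGraph.Walk.mem_support_append_iff]
        exact Or.inl (SimpleGraph.Walk.end_mem_support _)
      have := hstrict x u₀ hu₀x fun h => hxu h.symm
      omega
    have hsub : (G.edgeFinset.filter fun e => f e = w) ⊆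
        ((P w).dropUntil u₀ hu₀sup).edges.toFinset := by
      intro e hmem
      rw [Finset.mem_filter] at hmem
      obtain ⟨he, hfe⟩ := hmem
      obtain ⟨-, he2, hmin⟩ := hf e he
      rw [hfe] at he2 hmin
      rw [List.mem_toFinset]
      have he3 : e ∈ (((P w).takeUntil u₀ hu₀sup).append
          ((P w).dropUntil u₀ hu₀sup)).edges := by
        rw [SimpleGraph.Walk.take_spec (P w) hu₀sup]
        exact he2
      rw [SimpleGraph.Walk.edges_append, List.mem_append] at he3
      rcases he3 with he3 | he3
      · exfalso
        have h4 : e ∈ (P u₀).edges := by rw [hpre w u₀ hu₀sup]; exact he3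
        have h5 := hmin u₀ hu₀W h4
        have h6 := hstrict w u₀ hu₀sup hu₀w
        omega
      · exact he3
    calc (G.edgeFinset.filter fun e => f e = w).card
        ≤ ((P w).dropUntil u₀ hu₀sup).edges.toFinset.card := Finset.card_le_card hsub
      _ ≤ ((P w).dropUntil u₀ hu₀sup).edges.length := List.toFinset_card_le _
      _ = ((P w).dropUntil u₀ hu₀sup).length := SimpleGraph.Walk.length_edges _
      _ ≤ p := hDlen
  have hmain := Finset.card_le_mul_card_image G.edgeFinset p hfiber
  have himg : (G.edgeFinset.image f).card ≤ m - 1 := by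
    have hss : G.edgeFinset.image f ⊆ W.erase r := by
      intro w hw
      obtain ⟨e, he, rfl⟩ := Finset.mem_image.mp hw
      exact hfW e he
    calc (G.edgeFinset.image f).card ≤ (W.erase r).card := Finset.card_le_card hss
      _ = m - 1 := by rw [Finset.card_erase_of_mem hr, hm]
  calc G.edgeFinset.card ≤ p * (G.edgeFinset.image f).card := hmain
    _ ≤ p * (m - 1) := Nat.mul_le_mul_left _ himg
    _ = (m - 1) * p := Nat.mul_comm _ _
end

section
/- Let T be a Steiner tree for U in G with |U| ≥ 2, let U' = U ∪ {v ∈ V(T) : deg_T(v) ≠ 2}, and let P be a path in T of maximum length among all paths in T whose endpoints lie in U' and none of whose internal vertices lies in U'. Let x be the vertex of P at distance ⌊|P|/2⌋ along P from one of its endpoints, where |P| denotes the number of edges of P. Then the graph distance in G from x to every vertex u ∈ U is at least ⌊|P|/2⌋. -/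
/-- A Steiner tree for `U` in `G`: a subgraph `T` of `G` that is a tree, contains `U`
among its vertices, and has the minimum number of vertices among all such trees. -/
def IsSteinerTree {V : Type*} (G : SimpleGraph V) (U : Set V) (T : G.Subgraph) : Prop :=
  T.coe.IsTree ∧ U ⊆ T.verts ∧
    ∀ T' : G.Subgraph, T'.coe.IsTree → U ⊆ T'.verts → T.verts.ncard ≤ T'.verts.ncard


open SimpleGraph

namespace SteinerAux

variable {V : Type*}

lemma getVert_inj {G : SimpleGraph V} {u v : V} {p : G.Walk u v}
    (hp : p.IsPath) : ∀ i, i ≤ p.length → ∀ j, j ≤ p.length →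
      p.getVert i = p.getVert j → i = j := by
  induction p with
  | nil => intro i hi j hj _; simp only [Walk.length_nil, Nat.le_zero] at hi hj; omega
  | @cons u' v' w' h q ih =>
    rw [Walk.cons_isPath_iff] at hp
    intro i hi j hj hij
    match i, j with
    | 0, 0 => rfl
    | 0, j+1 =>
      exfalso
      apply hp.2
      rw [Walk.mem_support_iff_exists_getVert]
      refine ⟨j, ?_, by simpa using hj⟩
      simpa [Walk.getVert_cons_succ, Walk.getVert_zero] using hij.symm
    | i+1, 0 =>
      exfalso
      apply hp.2
      rw [Walk.mem_support_iff_exists_getVert]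
      refine ⟨i, ?_, by simpa using hi⟩
      simpa [Walk.getVert_cons_succ, Walk.getVert_zero] using hij
    | i+1, j+1 =>
      have := ih hp.1 i (by simpa using hi) j (by simpa using hj)
        (by simpa [Walk.getVert_cons_succ] using hij)
      omega

lemma exists_first_hit {G : SimpleGraph V} {w t : V} (R : G.Walk w t) (M : Set V) (ht : t ∈ M) :
    ∃ s ∈ M, ∃ Q : G.Walk w s, ∀ y ∈ Q.support, y ∈ M → y = s := by
  classical
  induction R with
  | nil => exact ⟨_, ht, Walk.nil, fun y hy _ => by simpa using hy⟩
  | @cons w' v' t' h R ih =>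
    by_cases hw : w' ∈ M
    · exact ⟨w', hw, Walk.nil, fun y hy _ => by simpa using hy⟩
    · obtain ⟨s, hs, Q, hQ⟩ := ih ht
      refine ⟨s, hs, Walk.cons h Q, ?_⟩
      intro y hy hyM
      rw [Walk.support_cons, List.mem_cons] at hy
      rcases hy with rfl | hy
      · exact absurd hyM hw
      · exact hQ y hy hyM

lemma reachable_of_adj_reachable {G G' : SimpleGraph V}
    (h : ∀ x y, G.Adj x y → G'.Reachable x y) {u v : V} (r : G.Reachable u v) :
    G'.Reachable u v := by
  obtain ⟨p⟩ := r
  induction p with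
  | nil => exact Reachable.refl _
  | cons ha p ih => exact (h _ _ ha).trans ih

lemma exists_tree_le [Fintype V] (G : SimpleGraph V) (hc : G.Connected) :
    ∃ H, H ≤ G ∧ H.IsTree := by
  classical
  suffices h : ∀ n (G : SimpleGraph V), G.edgeSet.ncard = n → G.Connected →
      ∃ H, H ≤ G ∧ H.IsTree from h _ G rfl hc
  intro n
  induction n using Nat.strong_induction_on with
  | _ n ih =>
    intro G hn hc
    by_cases hac : G.IsAcyclic
    · exact ⟨G, le_rfl, ⟨hc, hac⟩⟩
    · rw [IsAcyclic] at hac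
      push_neg at hac
      obtain ⟨v, c, hcyc⟩ := hac
      cases c with
      | nil => exact absurd hcyc (by simp [Walk.isCycle_def, Walk.isTrail_def])
      | @cons _ w _ hadj q =>
        have he : s(v, w) ∈ (Walk.cons hadj q).edges := by simp
        have hnb : ¬ G.IsBridge s(v, w) := by
          rw [isBridge_iff_adj_and_forall_cycle_notMem]
          push_neg
          exact ⟨v, _, hcyc, he⟩
          exact hadj
        rw [isBridge_iff] at hnb
        push_neg at hnb
        have hreach := hnb
        have hle : G \ fromEdgeSet {s(v, w)} ≤ G := sdiff_le
        have hconn' : (G \ fromEdgeSet {s(v, w)}).Connected := by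
          have hpre : ∀ x y, G.Adj x y → (G \ fromEdgeSet {s(v, w)}).Reachable x y := by
            intro x y hxy
            by_cases hxy' : s(x, y) = s(v, w)
            · rw [Sym2.eq_iff] at hxy'
              rcases hxy' with ⟨rfl, rfl⟩ | ⟨rfl, rfl⟩
              · exact hreach
              · exact hreach.symm
            · refine Adj.reachable ?_
              rw [sdiff_adj]
              exact ⟨hxy, by simp [fromEdgeSet_adj, hxy']⟩
          exact { preconnected := fun x y => reachable_of_adj_reachable hpre (hc.preconnected x y),
                  nonempty := hc.nonempty }
        have hecard : (G \ fromEdgeSet {s(v, w)}).edgeSet.ncard < n := by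
          have hes : (G \ fromEdgeSet {s(v, w)}).edgeSet = G.edgeSet \ {s(v, w)} := by
            simp [edgeSet_sdiff, edgeSet_fromEdgeSet, edgeSet_sdiff_sdiff_isDiag]
          rw [hes, ← hn]
          exact Set.ncard_diff_singleton_lt_of_mem hadj (G.edgeSet.toFinite)
        obtain ⟨H, hH, ht⟩ := ih _ hecard _ rfl hconn'
        exact ⟨H, hH.trans hle, ht⟩

lemma exists_spanning_tree [Fintype V] {G : SimpleGraph V} (H : G.Subgraph)
    (hc : H.coe.Connected) : ∃ T' : G.Subgraph, T'.verts = H.verts ∧ T'.coe.IsTree := by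
  classical
  haveI : Fintype ↥H.verts := Set.Finite.fintype (Set.toFinite _)
  obtain ⟨st, hle, htree⟩ := exists_tree_le H.coe hc
  let T' : G.Subgraph :=
    { verts := H.verts
      Adj := fun v w => ∃ (hv : v ∈ H.verts) (hw : w ∈ H.verts), st.Adj ⟨v, hv⟩ ⟨w, hw⟩
      adj_sub := by
        rintro v w ⟨hv, hw, hst⟩
        exact H.adj_sub (hle hst)
      edge_vert := by
        rintro v w ⟨hv, hw, hst⟩
        exact hv
      symm := by
        constructor
        rintro v w ⟨hv, hw, hst⟩
        exact ⟨hw, hv, hst.symm⟩ }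
  have hEq : T'.coe = st := by
    ext ⟨vv, hv⟩ ⟨ww, hw⟩
    simp only [Subgraph.coe_adj]
    constructor
    · rintro ⟨hv', hw', h⟩; exact h
    · intro h; exact ⟨hv, hw, h⟩
  exact ⟨T', rfl, hEq ▸ htree⟩

lemma reachable_induce_of_walk {G : SimpleGraph V} {W : Set V} {v w : V} (g : G.Walk v w)
    (hs : ∀ y ∈ g.support, y ∈ W) (hv : v ∈ W) (hw : w ∈ W) :
    ((⊤ : G.Subgraph).induce W).coe.Reachable ⟨v, hv⟩ ⟨w, hw⟩ := by
  induction g with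
  | nil => exact Reachable.refl _
  | @cons a c d h p ih =>
    have hcW : c ∈ W := hs c (by simp)
    have hadj : ((⊤ : G.Subgraph).induce W).coe.Adj ⟨a, hv⟩ ⟨c, hcW⟩ := by
      simp only [Subgraph.coe_adj, Subgraph.induce_adj, Subgraph.top_adj]
      exact ⟨hv, hcW, h⟩
    exact hadj.reachable.trans (ih (fun y hy => hs y (by simp [hy])) hcW hw)


variable {V : Type*}

/-- If `Q` is a walk ending at an interior vertex `s = P.getVert j` of the path `P`
(whose interior vertices all have degree 2 in `T`), starting elsewhere, and no vertex of `Q`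
other than `s` equals the two `P`-neighbours of `s`, we get a contradiction. -/
lemma noInteriorStop {G : SimpleGraph V} {T : G.Subgraph} [Fintype V] {a b : T.verts}
    {P : T.coe.Walk a b} (hP : P.IsPath)
    (hdeg2 : ∀ j, 0 < j → j < P.length → (T.neighborSet ↑(P.getVert j)).ncard = 2)
    {c s : T.verts} (Q : T.coe.Walk c s) (j : ℕ) (hj0 : 0 < j) (hjL : j < P.length)
    (hs : s = P.getVert j) (hcs : c ≠ s)
    (hav : ∀ y ∈ Q.support, y ≠ s → y ≠ P.getVert (j - 1) ∧ y ≠ P.getVert (j + 1)) :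
    False := by
  have h1 : T.coe.Adj (P.getVert (j - 1)) (P.getVert j) := by
    have := P.adj_getVert_succ (i := j - 1) (by omega)
    rwa [show j - 1 + 1 = j by omega] at this
  have h2 : T.coe.Adj (P.getVert j) (P.getVert (j + 1)) := P.adj_getVert_succ hjL
  have hprevnext : (↑(P.getVert (j - 1)) : V) ≠ ↑(P.getVert (j + 1)) := by
    intro h
    have := getVert_inj hP (j - 1) (by omega) (j + 1) (by omega) (Subtype.ext h)
    omega
  have hpair : ({(↑(P.getVert (j - 1)) : V), ↑(P.getVert (j + 1))} : Set V)
      ⊆ T.neighborSet ↑(P.getVert j) := by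
    rintro z (rfl | rfl)
    · exact (Subgraph.coe_adj _ _ _ |>.mp h1).symm
    · exact Subgraph.coe_adj _ _ _ |>.mp h2
  have hpaireq : ({(↑(P.getVert (j - 1)) : V), ↑(P.getVert (j + 1))} : Set V)
      = T.neighborSet ↑(P.getVert j) := by
    apply Set.eq_of_subset_of_ncard_le hpair _ (Set.toFinite _)
    rw [hdeg2 j hj0 hjL, Set.ncard_pair hprevnext]
  -- the walk `Q` is nontrivial, take the penultimate vertex
  have hQl : 0 < Q.length := by
    by_contra h
    push_neg at h
    have h0 : Q.length = 0 := by omega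
    exact hcs (Walk.eq_of_length_eq_zero h0)
  set y := Q.getVert (Q.length - 1) with hy
  have hadj : T.coe.Adj y s := by
    have := Q.adj_getVert_succ (i := Q.length - 1) (by omega)
    rwa [show Q.length - 1 + 1 = Q.length by omega, Q.getVert_length] at this
  have hymem : y ∈ Q.support := by
    rw [Walk.mem_support_iff_exists_getVert]
    exact ⟨Q.length - 1, rfl, by omega⟩
  have hyne : y ≠ s := fun h => (h ▸ hadj).ne rfl
  have hyS : (↑y : V) ∈ T.neighborSet ↑(P.getVert j) := by
    rw [← hs]
    exact (Subgraph.coe_adj _ _ _ |>.mp hadj).symm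
  rw [← hpaireq] at hyS
  obtain ⟨hy1, hy2⟩ := hav y hymem hyne
  rcases hyS with h | h
  · exact hy1 (Subtype.ext h)
  · exact hy2 (Subtype.ext h)

lemma aux_side [Fintype V] (G : SimpleGraph V) (hG : G.Connected) (U : Set V)
    (T : G.Subgraph) (hT : IsSteinerTree G U T)
    {a b : T.verts} (P : T.coe.Walk a b) (hP : P.IsPath)
    (hdeg2 : ∀ j, 0 < j → j < P.length → (T.neighborSet ↑(P.getVert j)).ncard = 2)
    (hnotU : ∀ j, 0 < j → j < P.length → (↑(P.getVert j) : V) ∉ U)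
    {uT : T.verts} (hu : (↑uT : V) ∈ U)
    (m : ℕ) (hm0 : 0 < m) (hmL : m < P.length)
    (Qu : T.coe.Walk uT a)
    (hQu : ∀ y ∈ Qu.support, ∀ j, 0 < j → j < P.length → y ≠ P.getVert j)
    (hd : G.dist ↑(P.getVert m) ↑uT < m) : False := by
  classical
  set L := P.length with hL
  set xT : T.verts := P.getVert m with hxT
  have hinj : ∀ i, i ≤ L → ∀ j, j ≤ L →
      (↑(P.getVert i) : V) = ↑(P.getVert j) → i = j :=
    fun i hi j hj h => getVert_inj hP i hi j hj (Subtype.ext h)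
  set Sv : Set V := (fun i => (↑(P.getVert i) : V)) '' Set.Ioo 0 m with hSv
  have hxnotS : (↑xT : V) ∉ Sv := by
    rintro ⟨i, hi, hieq⟩
    rw [Set.mem_Ioo] at hi
    have := hinj i (by omega) m (by omega) hieq
    omega
  have hanotS : (↑a : V) ∉ Sv := by
    rintro ⟨i, hi, hieq⟩
    rw [Set.mem_Ioo] at hi
    rw [show (↑a : V) = ↑(P.getVert 0) by rw [Walk.getVert_zero]] at hieq
    have := hinj i (by omega) 0 (by omega) hieq
    omega
  have hSsubT : Sv ⊆ T.verts := by rintro _ ⟨i, hi, rfl⟩; exact (P.getVert i).2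
  have hSnotU : ∀ y ∈ Sv, y ∉ U := by
    rintro _ ⟨i, hi, rfl⟩
    rw [Set.mem_Ioo] at hi
    exact hnotU i hi.1 (by omega)
  have hunotS : (↑uT : V) ∉ Sv := fun h => hSnotU _ h hu
  obtain ⟨g, hgpath, hglen⟩ := hG.exists_path_of_dist ↑xT ↑uT
  set W : Set V := (T.verts \ Sv) ∪ {y | y ∈ g.support} with hW
  have hxW : (↑xT : V) ∈ W := Or.inl ⟨xT.2, hxnotS⟩
  have haW : (↑a : V) ∈ W := Or.inl ⟨a.2, hanotS⟩
  have huW : (↑uT : V) ∈ W := Or.inl ⟨uT.2, hunotS⟩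
  have hgsubW : ∀ y ∈ g.support, y ∈ W := fun y hy => Or.inr hy
  set H : G.Subgraph := (⊤ : G.Subgraph).induce W with hH
  have treach : ∀ (p q : T.verts) (Q : T.coe.Walk p q),
      (∀ y ∈ Q.support, (↑y : V) ∉ Sv) → ∀ (hp : (↑p : V) ∈ W) (hq : (↑q : V) ∈ W),
      H.coe.Reachable ⟨↑p, hp⟩ ⟨↑q, hq⟩ := by
    intro p q Q hQ hp hq
    refine reachable_induce_of_walk (Q.map T.hom) ?_ hp hq
    intro y hy
    rw [Walk.support_map] at hy
    obtain ⟨z, hz, rfl⟩ := List.mem_map.mp hy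
    exact Or.inl ⟨z.2, hQ z hz⟩
  have hgx : H.coe.Reachable ⟨↑xT, hxW⟩ ⟨↑uT, huW⟩ := reachable_induce_of_walk g hgsubW hxW huW
  have hQuS : ∀ y ∈ Qu.support, (↑y : V) ∉ Sv := by
    rintro y hy ⟨i, hi, hieq⟩
    rw [Set.mem_Ioo] at hi
    exact hQu y hy i hi.1 (by omega) (Subtype.ext hieq.symm)
  have hua : H.coe.Reachable ⟨↑uT, huW⟩ ⟨↑a, haW⟩ := treach uT a Qu hQuS huW haW
  have hax : H.coe.Reachable ⟨↑a, haW⟩ ⟨↑xT, hxW⟩ := hua.symm.trans hgx.symm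
  have hreach_x : ∀ (y : V) (hy : y ∈ W), H.coe.Reachable ⟨y, hy⟩ ⟨↑xT, hxW⟩ := by
    intro y hy
    rcases hy with hyT | hyg
    · -- `y` is a vertex of `T` avoiding `Sv`
      set yT : T.verts := ⟨y, hyT.1⟩ with hyT'
      obtain ⟨R⟩ := (hT.1.isConnected.preconnected yT a)
      set M : Set T.verts := {z | (↑z : V) ∈ Sv ∨ z = a ∨ z = xT} with hM
      obtain ⟨s, hsM, Q, hQ⟩ := exists_first_hit R M (Or.inr (Or.inl rfl))
      by_cases hsS : (↑s : V) ∈ Sv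
      · exfalso
        obtain ⟨i, hi, hieq⟩ := hsS
        rw [Set.mem_Ioo] at hi
        have hsv : s = P.getVert i := Subtype.ext hieq.symm
        have hprevM : P.getVert (i - 1) ∈ M := by
          rw [hM, Set.mem_setOf_eq]
          rcases Nat.eq_zero_or_pos (i - 1) with h0 | h0
          · right; left
            rw [h0]
            exact Subtype.ext (by rw [Walk.getVert_zero])
          · left; exact ⟨i - 1, Set.mem_Ioo.mpr ⟨h0, by omega⟩, rfl⟩
        have hnextM : P.getVert (i + 1) ∈ M := by
          rw [hM, Set.mem_setOf_eq]
          rcases eq_or_ne (i + 1) m with h0 | h0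
          · right; right; rw [h0, hxT]
          · left; exact ⟨i + 1, Set.mem_Ioo.mpr ⟨by omega, by omega⟩, rfl⟩
        refine noInteriorStop hP hdeg2 Q i hi.1 (by omega) hsv ?_ ?_
        · intro h
          have hySv : (↑yT : V) ∈ Sv := by
            rw [h]
            exact ⟨i, Set.mem_Ioo.mpr hi, hieq⟩
          exact hyT.2 hySv
        · intro z hz hzs
          refine ⟨fun heq => hzs (hQ z hz ?_), fun heq => hzs (hQ z hz ?_)⟩
          · rw [heq]; exact hprevM
          · rw [heq]; exact hnextM
      · have hQS : ∀ z ∈ Q.support, (↑z : V) ∉ Sv := by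
          intro z hz hzS
          exact hsS (hQ z hz (Or.inl hzS) ▸ hzS)
        rcases hsM with hsS' | hsa | hsx
        · exact absurd hsS' hsS
        · exact (treach yT a (Q.copy rfl hsa) (by
            intro z hz
            rw [Walk.support_copy] at hz
            exact hQS z hz) (Or.inl hyT) haW).trans hax
        · exact treach yT xT (Q.copy rfl hsx) (by
            intro z hz
            rw [Walk.support_copy] at hz
            exact hQS z hz) (Or.inl hyT) hxW
    · obtain ⟨gw, hgw⟩ : ∃ gw : G.Walk ↑xT y, ∀ z ∈ gw.support, z ∈ g.support :=
        ⟨g.takeUntil y hyg, fun z hz => Walk.support_takeUntil_subset _ _ hz⟩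
      exact (reachable_induce_of_walk gw (fun z hz => hgsubW z (hgw z hz)) hxW
        (Or.inr hyg)).symm
  have hconn : H.coe.Connected := by
    refine { preconnected := fun p q => ?_, nonempty := ⟨⟨↑xT, hxW⟩⟩ }
    exact (hreach_x p.1 p.2).trans (hreach_x q.1 q.2).symm
  obtain ⟨T', hT'verts, hT'tree⟩ := exists_spanning_tree H hconn
  have hUsub : U ⊆ T'.verts := by
    rw [hT'verts]
    intro z hz
    exact Or.inl ⟨hT.2.1 hz, fun hzS => hSnotU z hzS hz⟩
  have hmin := hT.2.2 T' hT'tree hUsub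
  -- counting
  have hT'card : T'.verts.ncard = W.ncard := by rw [hT'verts]; rfl
  have hIooeq : (Set.Ioo 0 m) = ↑(Finset.Ioo 0 m) := by simp
  have hinjOn : Set.InjOn (fun i => (↑(P.getVert i) : V)) (Set.Ioo 0 m) := by
    intro i hi j hj h
    rw [Set.mem_Ioo] at hi hj
    exact hinj i (by omega) j (by omega) h
  have hScard : Sv.ncard = m - 1 := by
    rw [hSv, Set.ncard_image_of_injOn hinjOn, hIooeq, Set.ncard_coe_finset, Nat.card_Ioo]
    omega
  have hdiffeq : (T.verts \ Sv).ncard + Sv.ncard = T.verts.ncard :=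
    Set.ncard_diff_add_ncard_of_subset hSsubT (Set.toFinite _)
  have hWle : W.ncard ≤ (T.verts \ Sv).ncard + ({y | y ∈ g.support} \ (T.verts \ Sv)).ncard := by
    rw [hW, ← Set.union_diff_self]
    exact Set.ncard_union_le _ _
  have hxu : (↑xT : V) ≠ ↑uT := fun h => hnotU m hm0 hmL (h ▸ hu)
  have hBsub : {y | y ∈ g.support} \ (T.verts \ Sv) ⊆ {y | y ∈ g.support} \ {↑xT, ↑uT} := by
    rintro z ⟨hz1, hz2⟩
    refine ⟨hz1, ?_⟩
    rintro (rfl | rfl)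
    · exact hz2 ⟨xT.2, hxnotS⟩
    · exact hz2 ⟨uT.2, hunotS⟩
  have hgsup_eq : {y | y ∈ g.support} = ↑g.support.toFinset := by ext z; simp
  have hgcard : ({y | y ∈ g.support} : Set V).ncard = g.length + 1 := by
    rw [hgsup_eq, Set.ncard_coe_finset, List.toFinset_card_of_nodup hgpath.support_nodup,
      Walk.length_support]
  have hpairsub : ({↑xT, ↑uT} : Set V) ⊆ {y | y ∈ g.support} := by
    rintro z (rfl | rfl)
    · exact g.start_mem_support
    · exact g.end_mem_support
  have hdiff2 : ({y | y ∈ g.support} \ {(↑xT : V), ↑uT}).ncard + 2 = g.length + 1 := by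
    have := Set.ncard_diff_add_ncard_of_subset hpairsub (Set.toFinite _)
    rwa [Set.ncard_pair hxu, hgcard] at this
  have hBle : ({y | y ∈ g.support} \ (T.verts \ Sv)).ncard
      ≤ ({y | y ∈ g.support} \ {(↑xT : V), ↑uT}).ncard :=
    Set.ncard_le_ncard hBsub (Set.toFinite _)
  have hglen' : g.length < m := by rw [hglen]; exact hd
  have hgpos : 0 < g.length := by
    rcases Nat.eq_zero_or_pos g.length with h | h
    · exact absurd (Walk.eq_of_length_eq_zero h) hxu
    · exact h
  rw [hT'card] at hmin
  omega

end SteinerAux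

/-- Let `T` be a Steiner tree for `U` in `G` with `|U| ≥ 2`, let
`U' = U ∪ {v ∈ V(T) : deg_T(v) ≠ 2}`, and let `P` be a path in `T` of maximum length
among all paths in `T` whose endpoints lie in `U'` and none of whose internal vertices
lies in `U'`. If `x` is the vertex of `P` at distance `⌊|P|/2⌋` along `P` from one of
its endpoints, then the graph distance in `G` from `x` to every `u ∈ U` is at least
`⌊|P|/2⌋`. -/
theorem steinerTree_middle_vertex_far_from_U {V : Type*} [Fintype V]
    (G : SimpleGraph V) (hG : G.Connected) (U : Set V) (hU2 : 2 ≤ U.ncard)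
    (T : G.Subgraph) (hT : IsSteinerTree G U T)
    (U' : Set V) (hU' : U' = U ∪ {v ∈ T.verts | (T.neighborSet v).ncard ≠ 2})
    (a b : T.verts) (P : T.coe.Walk a b) (hP : P.IsPath)
    (ha : (a : V) ∈ U') (hb : (b : V) ∈ U')
    (hint : ∀ x ∈ P.support, x ≠ a → x ≠ b → (x : V) ∉ U')
    (hmax : ∀ (c d : T.verts) (Q : T.coe.Walk c d), Q.IsPath →
      (c : V) ∈ U' → (d : V) ∈ U' →
      (∀ x ∈ Q.support, x ≠ c → x ≠ d → (x : V) ∉ U') → Q.length ≤ P.length)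
    (x : T.verts) (hx : x = P.getVert (P.length / 2)) :
    ∀ u ∈ U, P.length / 2 ≤ G.dist (x : V) u := by
  classical
  intro u hu
  by_cases hk0 : P.length / 2 = 0
  · simp [hk0]
  · by_contra hlt
    push_neg at hlt
    have hk1 : 0 < P.length / 2 := Nat.pos_of_ne_zero hk0
    have hkL : P.length / 2 < P.length := by omega
    have hint' : ∀ j, 0 < j → j < P.length → (↑(P.getVert j) : V) ∉ U' := by
      intro j hj0 hjL
      refine hint (P.getVert j) ?_ ?_ ?_
      · rw [Walk.mem_support_iff_exists_getVert]
        exact ⟨j, rfl, by omega⟩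
      · intro h
        have := SteinerAux.getVert_inj hP j (by omega) 0 (by omega)
          (by rw [Walk.getVert_zero]; exact h)
        omega
      · intro h
        have := SteinerAux.getVert_inj hP j (by omega) P.length (le_refl _)
          (by rw [Walk.getVert_length]; exact h)
        omega
    have hU'mem : ∀ j, 0 < j → j < P.length →
        (↑(P.getVert j) : V) ∉ U ∧ (T.neighborSet ↑(P.getVert j)).ncard = 2 := by
      intro j hj0 hjL
      have h := hint' j hj0 hjL
      rw [hU'] at h
      simp only [Set.mem_union, Set.mem_setOf_eq, not_or, not_and, not_not] at h
      exact ⟨h.1, h.2 (P.getVert j).2⟩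
    obtain ⟨R⟩ := hT.1.isConnected.preconnected ⟨u, hT.2.1 hu⟩ a
    obtain ⟨s, hsM, Q, hQ⟩ := SteinerAux.exists_first_hit R
      {z : T.verts | (∃ j, 0 < j ∧ j < P.length ∧ z = P.getVert j) ∨ z = a ∨ z = b}
      (Or.inr (Or.inl rfl))
    rcases hsM with ⟨j, hj0, hjL, hsj⟩ | hsa | hsb
    · refine SteinerAux.noInteriorStop hP (fun j h0 hL => (hU'mem j h0 hL).2)
        Q j hj0 hjL hsj ?_ ?_
      · intro h
        have hnot : (↑(P.getVert j) : V) ∉ U := (hU'mem j hj0 hjL).1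
        rw [← hsj, ← h] at hnot
        exact hnot hu
      · intro z hz hzs
        constructor
        · intro heq
          apply hzs
          apply hQ z hz
          rcases Nat.eq_zero_or_pos (j - 1) with h0 | h0
          · exact Or.inr (Or.inl (by rw [heq, h0]; exact Walk.getVert_zero P))
          · exact Or.inl ⟨j - 1, h0, by omega, heq⟩
        · intro heq
          apply hzs
          apply hQ z hz
          rcases eq_or_ne (j + 1) P.length with h0 | h0
          · exact Or.inr (Or.inr (by rw [heq, h0]; exact Walk.getVert_length P))
          · exact Or.inl ⟨j + 1, by omega, by omega, heq⟩
    · refine SteinerAux.aux_side G hG U T hT P hP (fun j h0 hL => (hU'mem j h0 hL).2)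
        (fun j h0 hL => (hU'mem j h0 hL).1) hu (P.length / 2) hk1 hkL (Q.copy rfl hsa) ?_ ?_
      · intro y hy j h0 hjL heq
        have hys : y = s := hQ y (by rwa [Walk.support_copy] at hy) (Or.inl ⟨j, h0, hjL, heq⟩)
        have := SteinerAux.getVert_inj hP j (by omega) 0 (by omega)
          (by rw [Walk.getVert_zero, ← heq, hys, hsa])
        omega
      · rw [hx] at hlt
        exact hlt
    · have hrl : P.reverse.length = P.length := Walk.length_reverse P
      refine SteinerAux.aux_side G hG U T hT P.reverse hP.reverse ?_ ?_ hu
        (P.length - P.length / 2) (by omega) (by rw [hrl]; omega) (Q.copy rfl hsb) ?_ ?_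
      · intro j h0 hjL
        rw [hrl] at hjL
        rw [Walk.getVert_reverse]
        exact (hU'mem (P.length - j) (by omega) (by omega)).2
      · intro j h0 hjL
        rw [hrl] at hjL
        rw [Walk.getVert_reverse]
        exact (hU'mem (P.length - j) (by omega) (by omega)).1
      · intro y hy j h0 hjL heq
        rw [hrl] at hjL
        rw [Walk.getVert_reverse] at heq
        have hys : y = s := hQ y (by rwa [Walk.support_copy] at hy)
          (Or.inl ⟨P.length - j, by omega, by omega, heq⟩)
        have := SteinerAux.getVert_inj hP (P.length - j) (by omega) P.length (le_refl _)
          (by rw [Walk.getVert_length, ← heq, hys, hsb])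
        omega
      · rw [Walk.getVert_reverse, show P.length - (P.length - P.length / 2) = P.length / 2
          by omega]
        rw [hx] at hlt
        exact lt_of_lt_of_le hlt (by omega)
end
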